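/- For every $n \geq 2$, the node reliability of the complete bipartite graph $K_{n,n}$ equals $1 - 2(1-p)^n + 2np(1-p)^{2n-1} + (1-p)^{2n}$, and this function is strictly increasing on the interval $(0,1)$. -/

import Mathlib

open Finset
open scoped Classical

/-- The node reliability polynomial of a graph `G`: the probability that the set of
operational nodes is nonempty and induces a connected subgraph, when each node
operates independently with probability `p`. -/
noncomputable def nRel {V : Type*} [Fintype V] (G : SimpleGraph V) (p : ℝ) : ℝ :=
  ∑ s : Finset V, if (G.induce (s : Set V)).Connected
    then p ^ s.card * (1 - p) ^ (Fintype.card V - s.card) else 0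

/-- `cCount G k` is the number of `k`-element vertex subsets of `G` inducing a
connected subgraph (note: `SimpleGraph.Connected` requires nonemptiness). -/
noncomputable def cCount {V : Type*} [Fintype V] (G : SimpleGraph V) (k : ℕ) : ℕ :=
  ((Finset.univ : Finset (Finset V)).filter
    (fun s : Finset V => s.card = k ∧ (G.induce (s : Set V)).Connected)).card


lemma no_reach {V : Type*} {G : SimpleGraph V} (hno : ∀ v w : V, ¬ G.Adj v w)
    {x y : V} (h : G.Reachable x y) : x = y := by
  obtain ⟨w⟩ := h
  cases w with
  | nil => rfl
  | cons hadj _ => exact absurd hadj (hno _ _)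

lemma conn_iff {α β : Type*} (u : Finset (α ⊕ β)) :
    ((completeBipartiteGraph α β).induce (u : Set (α ⊕ β))).Connected ↔
      ((u.toLeft.Nonempty ∧ u.toRight.Nonempty) ∨ u.card = 1) := by
  constructor
  · intro h
    by_cases hb : u.toLeft.Nonempty ∧ u.toRight.Nonempty
    · exact Or.inl hb
    right
    have hne : u.Nonempty := by
      obtain ⟨⟨x, hx⟩⟩ := h.nonempty
      exact ⟨x, hx⟩
    have hno : ∀ v w : (u : Set (α ⊕ β)),
        ¬ ((completeBipartiteGraph α β).induce (u : Set (α ⊕ β))).Adj v w := by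
      rintro ⟨v, hv⟩ ⟨w, hw⟩ hadj
      simp only [SimpleGraph.comap_adj, Function.Embedding.coe_subtype,
        completeBipartiteGraph_adj] at hadj
      rcases not_and_or.mp hb with hL | hR
      · rw [Finset.not_nonempty_iff_eq_empty] at hL
        rcases v with a | b
        · exact absurd (Finset.mem_toLeft.mpr hv) (by simp [hL])
        rcases w with c | d
        · exact absurd (Finset.mem_toLeft.mpr hw) (by simp [hL])
        · simp at hadj
      · rw [Finset.not_nonempty_iff_eq_empty] at hR
        rcases v with a | b
        · rcases w with c | d
          · simp at hadj
          · exact absurd (Finset.mem_toRight.mpr hw) (by simp [hR])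
        · exact absurd (Finset.mem_toRight.mpr hv) (by simp [hR])
    have hss : ∀ x y : (u : Set (α ⊕ β)), x = y :=
      fun x y => no_reach hno (h.preconnected x y)
    have hle : u.card ≤ 1 := Finset.card_le_one.mpr fun x hx y hy =>
      congrArg Subtype.val (hss ⟨x, hx⟩ ⟨y, hy⟩)
    have := Finset.card_pos.mpr hne
    omega
  · rintro (⟨⟨a, ha⟩, ⟨b, hb⟩⟩ | hc)
    · rw [Finset.mem_toLeft] at ha
      rw [Finset.mem_toRight] at hb
      have ha' : (Sum.inl a : α ⊕ β) ∈ (u : Set (α ⊕ β)) := ha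
      have hb' : (Sum.inr b : α ⊕ β) ∈ (u : Set (α ⊕ β)) := hb
      have hadj : ∀ (x : α) (hx : (Sum.inl x : α ⊕ β) ∈ (u : Set (α ⊕ β))),
          ((completeBipartiteGraph α β).induce (u : Set (α ⊕ β))).Adj ⟨Sum.inl x, hx⟩ ⟨Sum.inr b, hb'⟩ := by
        intro x hx
        exact Or.inl ⟨rfl, rfl⟩
      have hadj' : ∀ (y : β) (hy : (Sum.inr y : α ⊕ β) ∈ (u : Set (α ⊕ β))),
          ((completeBipartiteGraph α β).induce (u : Set (α ⊕ β))).Adj ⟨Sum.inl a, ha'⟩ ⟨Sum.inr y, hy⟩ := by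
        intro y hy
        exact Or.inl ⟨rfl, rfl⟩
      have key : ∀ x : (u : Set (α ⊕ β)),
          ((completeBipartiteGraph α β).induce (u : Set (α ⊕ β))).Reachable x ⟨Sum.inr b, hb'⟩ := by
        rintro ⟨(c | d), hx⟩
        · exact (hadj c hx).reachable
        · exact ((hadj' d hx).symm.reachable).trans (hadj a ha').reachable
      haveI : Nonempty (u : Set (α ⊕ β)) := ⟨⟨Sum.inl a, ha'⟩⟩
      exact ⟨fun x y => (key x).trans (key y).symm⟩
    · obtain ⟨x, rfl⟩ := Finset.card_eq_one.mp hc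
      have hx : x ∈ (({x} : Finset (α ⊕ β)) : Set (α ⊕ β)) := by simp
      haveI : Nonempty (({x} : Finset (α ⊕ β)) : Set (α ⊕ β)) := ⟨⟨x, hx⟩⟩
      refine ⟨fun v w => ?_⟩
      have : v = w := by
        have hv := v.2
        have hw := w.2
        simp only [Finset.coe_singleton, Set.mem_singleton_iff] at hv hw
        exact Subtype.ext (hv.trans hw.symm)
      exact this ▸ SimpleGraph.Reachable.refl v


lemma sum_sum_type {α β : Type*} [Fintype α] [Fintype β] (f : Finset (α ⊕ β) → ℝ) :
    ∑ u : Finset (α ⊕ β), f u = ∑ s : Finset α, ∑ t : Finset β, f (s.disjSum t) := by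
  exact ((Fintype.sum_equiv
    ⟨fun st : Finset α × Finset β => st.1.disjSum st.2,
     fun u => (u.toLeft, u.toRight),
     fun st => by simp,
     fun u => Finset.toLeft_disjSum_toRight⟩
    (fun st => f (st.1.disjSum st.2)) f (fun _ => rfl)).symm).trans
    (Fintype.sum_prod_type (f := fun st : Finset α × Finset β => f (st.1.disjSum st.2)))

lemma sum_subsets {α : Type*} [Fintype α] (p q : ℝ) :
    ∑ s : Finset α, p ^ s.card * q ^ (Fintype.card α - s.card) = (p + q) ^ (Fintype.card α) := by
  have := Finset.prod_add (fun _ : α => p) (fun _ : α => q) Finset.univ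
  simp only [Finset.prod_const, Finset.powerset_univ] at this
  rw [← Finset.card_univ]
  rw [this]
  apply Finset.sum_congr rfl
  intro s _
  rw [Finset.card_sdiff_of_subset (Finset.subset_univ s)]

lemma sum_card_one {α : Type*} [Fintype α] (c : ℝ) :
    ∑ s : Finset α, (if s.card = 1 then c else 0) = (Fintype.card α) * c := by
  rw [← Finset.sum_filter]
  rw [Finset.sum_const]
  have : (Finset.univ.filter fun s : Finset α => s.card = 1) = Finset.powersetCard 1 Finset.univ := by
    rw [Finset.powersetCard_eq_filter, Finset.powerset_univ]
  rw [this, Finset.card_powersetCard, Finset.card_univ, Nat.choose_one_right, nsmul_eq_mul]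

lemma sum_nonempty {α : Type*} [Fintype α] (p q : ℝ) (h : p + q = 1) :
    ∑ s : Finset α, (if s.Nonempty then p ^ s.card * q ^ (Fintype.card α - s.card) else 0)
      = 1 - q ^ (Fintype.card α) := by
  have : ∀ s : Finset α, (if s.Nonempty then p ^ s.card * q ^ (Fintype.card α - s.card) else 0)
      = p ^ s.card * q ^ (Fintype.card α - s.card) - (if s = ∅ then q ^ (Fintype.card α) else 0) := by
    intro s
    by_cases hs : s = ∅
    · subst hs; simp
    · simp [Finset.nonempty_iff_ne_empty.mpr hs, hs]
  rw [Finset.sum_congr rfl fun s _ => this s, Finset.sum_sub_distrib, sum_subsets, h, one_pow]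
  congr 1
  simp


lemma pair_ineq {t : ℝ} (h0 : 0 ≤ t) (k : ℕ) (i : ℕ) (hi : i ≤ 2 * k) :
    2 * t ^ k ≤ t ^ i + t ^ (2 * k - i) := by
  rcases le_total i k with h | h
  · have e1 : t ^ i * t ^ (k - i) = t ^ k := by rw [← pow_add]; congr 1; omega
    have e2 : t ^ k * t ^ (k - i) = t ^ (2 * k - i) := by rw [← pow_add]; congr 1; omega
    nlinarith [mul_nonneg (pow_nonneg h0 i) (sq_nonneg (1 - t ^ (k - i))),
      pow_nonneg h0 i, pow_nonneg h0 (k - i)]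
  · have e1 : t ^ (2 * k - i) * t ^ (i - k) = t ^ k := by rw [← pow_add]; congr 1; omega
    have e2 : t ^ k * t ^ (i - k) = t ^ i := by rw [← pow_add]; congr 1; omega
    nlinarith [mul_nonneg (pow_nonneg h0 (2 * k - i)) (sq_nonneg (1 - t ^ (i - k))),
      pow_nonneg h0 (2 * k - i), pow_nonneg h0 (i - k)]

lemma key_ineq (k : ℕ) {t : ℝ} (h0 : 0 < t) (h1 : t < 1) :
    (2 * k + 1 : ℝ) * (1 - t) * t ^ k < 1 := by
  have hsum : (2 * k + 1 : ℝ) * t ^ k ≤ ∑ i ∈ Finset.range (2 * k + 1), t ^ i := by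
    have h2 : 2 * ∑ i ∈ Finset.range (2 * k + 1), t ^ i
        = ∑ i ∈ Finset.range (2 * k + 1), (t ^ i + t ^ (2 * k - i)) := by
      rw [Finset.sum_add_distrib, two_mul]
      congr 1
      exact (Finset.sum_range_reflect (fun i => t ^ i) (2 * k + 1)).symm
    have h3 : ∑ i ∈ Finset.range (2 * k + 1), (2 * t ^ k)
        ≤ ∑ i ∈ Finset.range (2 * k + 1), (t ^ i + t ^ (2 * k - i)) :=
      Finset.sum_le_sum fun i hi => pair_ineq h0.le k i (by
        have := Finset.mem_range.mp hi; omega)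
    rw [Finset.sum_const, Finset.card_range] at h3
    rw [nsmul_eq_mul] at h3
    rw [← h2] at h3
    push_cast at h3 ⊢
    nlinarith
  have hgeom : (∑ i ∈ Finset.range (2 * k + 1), t ^ i) * (1 - t) = 1 - t ^ (2 * k + 1) := by
    have := geom_sum_mul t (2 * k + 1)
    nlinarith [this]
  have htk : 0 < t ^ (2 * k + 1) := pow_pos h0 _
  have h1t : 0 < 1 - t := by linarith
  calc (2 * k + 1 : ℝ) * (1 - t) * t ^ k = ((2 * k + 1 : ℝ) * t ^ k) * (1 - t) := by ring
    _ ≤ (∑ i ∈ Finset.range (2 * k + 1), t ^ i) * (1 - t) := by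
        exact mul_le_mul_of_nonneg_right hsum h1t.le
    _ = 1 - t ^ (2 * k + 1) := hgeom
    _ < 1 := by linarith

lemma strict_mono_part (n : ℕ) (hn : 2 ≤ n) :
    StrictMonoOn (fun p : ℝ => 1 - 2 * (1 - p) ^ n + 2 * n * p * (1 - p) ^ (2 * n - 1)
      + (1 - p) ^ (2 * n)) (Set.Ioo (0:ℝ) 1) := by
  obtain ⟨m, rfl⟩ : ∃ m, n = m + 2 := ⟨n - 2, by omega⟩
  have hE1 : 2 * (m + 2) - 1 = 2 * m + 3 := by omega
  have hE2 : 2 * (m + 2) = 2 * m + 4 := by omega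
  simp only [hE1]
  simp only [hE2]
  apply strictMonoOn_of_deriv_pos (convex_Ioo 0 1)
  · fun_prop
  · intro x hx
    rw [interior_Ioo] at hx
    obtain ⟨hx0, hx1⟩ := hx
    have h1 : HasDerivAt (fun p : ℝ => 1 - p) (-1) x := (hasDerivAt_id x).const_sub 1
    have hA := h1.pow (m + 2)
    have hB := h1.pow (2 * m + 3)
    have hC := h1.pow (2 * m + 4)
    have hfun : (fun p : ℝ => 1 - 2 * (1 - p) ^ (m + 2) + 2 * (↑(m + 2) : ℝ) * p * (1 - p) ^ (2 * m + 3)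
        + (1 - p) ^ (2 * m + 4))
      = (fun p : ℝ => 1 - 2 * (1 - p) ^ (m + 2) + 2 * ((m : ℝ) + 2) * (p * (1 - p) ^ (2 * m + 3))
        + (1 - p) ^ (2 * m + 4)) := by
      funext p
      push_cast
      ring
    have hd := (((hA.const_mul (2:ℝ)).const_sub 1).add
        (((hasDerivAt_id' x).mul hB).const_mul (2 * ((m : ℝ) + 2)))).add hC
    rw [hfun]
    rw [HasDerivAt.deriv (f := fun p : ℝ => 1 - 2 * (1 - p) ^ (m + 2) + 2 * ((m : ℝ) + 2) * (p * (1 - p) ^ (2 * m + 3)) + (1 - p) ^ (2 * m + 4)) hd]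
    simp only [Pi.pow_apply]
    have hkey := key_ineq (m + 1) (t := 1 - x) (by linarith) (by linarith)
    have hkey' : (2 * (m : ℝ) + 3) * x * (1 - x) ^ (m + 1) < 1 := by
      have : (1 : ℝ) - (1 - x) = x := by ring
      push_cast at hkey
      nlinarith [hkey]
    have hP : (0:ℝ) < (1 - x) ^ (m + 1) := pow_pos (by linarith) _
    have e1 : (1 - x) ^ (2 * m + 2) = (1 - x) ^ (m + 1) * (1 - x) ^ (m + 1) := by
      rw [← pow_add]; congr 1; omega
    have e2 : (1 - x) ^ (m + 2 - 1) = (1 - x) ^ (m + 1) := by norm_num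
    have e3 : (1 - x) ^ (2 * m + 3 - 1) = (1 - x) ^ (2 * m + 2) := by norm_num
    have e4 : (1 - x) ^ (2 * m + 4 - 1) = (1 - x) ^ (2 * m + 3) := by norm_num
    rw [e2, e3, e4, e1]
    push_cast
    nlinarith [mul_pos hP (sub_pos.mpr hkey'), hP, mul_pos hP hP]

lemma nRel_eq (n : ℕ) (p : ℝ) :
    nRel (completeBipartiteGraph (Fin n) (Fin n)) p =
      1 - 2 * (1 - p) ^ n + 2 * n * p * (1 - p) ^ (2 * n - 1) + (1 - p) ^ (2 * n) := by
  have hcard : Fintype.card (Fin n ⊕ Fin n) = 2 * n := by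
    simp [two_mul]
  unfold nRel
  simp only [hcard]
  set q : ℝ := 1 - p with hq
  have hpq : p + q = 1 := by ring
  rw [sum_sum_type]
  have key : ∀ (s t : Finset (Fin n)),
      (if ((completeBipartiteGraph (Fin n) (Fin n)).induce
          ((s.disjSum t : Finset (Fin n ⊕ Fin n)) : Set (Fin n ⊕ Fin n))).Connected
        then p ^ (s.disjSum t).card * q ^ (2 * n - (s.disjSum t).card) else 0)
      = (if s.Nonempty then p ^ s.card * q ^ (n - s.card) else 0) *
          (if t.Nonempty then p ^ t.card * q ^ (n - t.card) else 0)
        + (if s.card = 1 then p * q ^ (2 * n - 1) else 0) * (if t = ∅ then 1 else 0)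
        + (if s = ∅ then 1 else 0) * (if t.card = 1 then p * q ^ (2 * n - 1) else 0) := by
    intro s t
    simp only [conn_iff]
    have hsn : s.card ≤ n := by simpa using Finset.card_le_univ s
    have htn : t.card ≤ n := by simpa using Finset.card_le_univ t
    simp only [Finset.toLeft_disjSum, Finset.toRight_disjSum, Finset.card_disjSum]
    by_cases hs : s = ∅ <;> by_cases ht : t = ∅
    · subst hs; subst ht; simp
    · subst hs
      have htne : t.Nonempty := Finset.nonempty_iff_ne_empty.mpr ht
      by_cases h1 : t.card = 1
      · simp [htne, ht, h1, Finset.not_nonempty_empty]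
      · have : ¬ (0 + t.card = 1) := by simpa using h1
        simp [htne, ht, h1, Finset.not_nonempty_empty, this]
    · subst ht
      have hsne : s.Nonempty := Finset.nonempty_iff_ne_empty.mpr hs
      by_cases h1 : s.card = 1
      · simp [hsne, hs, h1, Finset.not_nonempty_empty]
      · have : ¬ (s.card + 0 = 1) := by simpa using h1
        simp [hsne, hs, h1, Finset.not_nonempty_empty, this]
    · have hsne : s.Nonempty := Finset.nonempty_iff_ne_empty.mpr hs
      have htne : t.Nonempty := Finset.nonempty_iff_ne_empty.mpr ht
      have hs1 : 1 ≤ s.card := Finset.card_pos.mpr hsne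
      have ht1 : 1 ≤ t.card := Finset.card_pos.mpr htne
      have hcond : (s.Nonempty ∧ t.Nonempty) ∨ s.card + t.card = 1 := Or.inl ⟨hsne, htne⟩
      simp only [hs, ht, if_false, mul_zero, zero_mul, add_zero]
      rw [if_pos hcond, if_pos hsne, if_pos htne]
      have hexp : q ^ (2 * n - (s.card + t.card)) = q ^ (n - s.card) * q ^ (n - t.card) := by
        rw [← pow_add]
        congr 1
        omega
      rw [pow_add, hexp]
      ring
  rw [Finset.sum_congr rfl fun s _ => Finset.sum_congr rfl fun t _ => key s t]
  simp only [Finset.sum_add_distrib, ← Finset.sum_mul, ← Finset.mul_sum]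
  have e1 : ∑ s : Finset (Fin n), (if s.Nonempty then p ^ s.card * q ^ (n - s.card) else 0)
      = 1 - q ^ n := by
    have := sum_nonempty (α := Fin n) p q hpq
    simpa using this
  have e2 : ∑ s : Finset (Fin n), (if s.card = 1 then p * q ^ (2 * n - 1) else 0)
      = n * (p * q ^ (2 * n - 1)) := by
    have := sum_card_one (α := Fin n) (p * q ^ (2 * n - 1))
    simpa using this
  have e3 : ∑ t : Finset (Fin n), (if t = ∅ then (1:ℝ) else 0) = 1 := by simp
  rw [e1, e2, e3]
  have hq2 : q ^ (2 * n) = (q ^ n) ^ 2 := by rw [← pow_mul, mul_comm]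
  rw [hq2]
  ring

theorem stmt4 (n : ℕ) (hn : 2 ≤ n) :
    (∀ p : ℝ, nRel (completeBipartiteGraph (Fin n) (Fin n)) p =
      1 - 2 * (1 - p) ^ n + 2 * n * p * (1 - p) ^ (2 * n - 1) + (1 - p) ^ (2 * n)) ∧
    StrictMonoOn (nRel (completeBipartiteGraph (Fin n) (Fin n))) (Set.Ioo (0:ℝ) 1) := by
  refine ⟨fun p => nRel_eq n p, ?_⟩
  have hfun : nRel (completeBipartiteGraph (Fin n) (Fin n))
      = fun p : ℝ => 1 - 2 * (1 - p) ^ n + 2 * n * p * (1 - p) ^ (2 * n - 1) + (1 - p) ^ (2 * n) :=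
    funext fun p => nRel_eq n p
  rw [hfun]
  exact strict_mono_part n hn
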